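/- Let n ≥ 1, let γ ∈ (0, 1/2), and set b = γn. Let a_1, …, a_n, f_1, …, f_n be 2n mutually independent random variables, each uniformly distributed on [0,1], and set c_i = f_i·a_i. Consider the knapsack problem: maximize ∑_{i=1}^n c_i y_i over y ∈ {0,1}^n subject to ∑_{i=1}^n a_i y_i ≤ b, and its LP relaxation over y ∈ [0,1]^n. Then with probability at least 1 − ⌈2√n⌉·exp(−√n/8) the following holds: for every optimal solution y* of the knapsack problem and every optimal solution ỹ of the LP relaxation having at most one coordinate strictly between 0 and 1, setting U = { i : ỹ_i = 1 } and L = { i : ỹ_i = 0 }, one has ∑_{i∈U} y_i* ≥ |U| − 4√2·n^{3/4} and ∑_{i∈L} y_i* ≤ 4√2·n^{3/4}. -/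

import Mathlib

set_option maxHeartbeats 1000000

open MeasureTheory ProbabilityTheory Finset
open scoped ENNReal

namespace PMVBaux

lemma sum_mul_add_ite {n : ℕ} (A y : Fin n → ℝ) (j : Fin n) (ε : ℝ) :
    ∑ i, A i * (y i + if i = j then ε else 0) = (∑ i, A i * y i) + A j * ε := by
  have : ∀ i ∈ Finset.univ, A i * (y i + if i = j then ε else 0)
      = A i * y i + (if i = j then A i * ε else 0) := by
    intro i _; by_cases h : i = j <;> simp [h, mul_add]
  rw [Finset.sum_congr rfl this, Finset.sum_add_distrib, Finset.sum_ite_eq' Finset.univ j]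
  simp

/-- LP exchange: if `f i < f j` and `ytil j < 1` then `ytil i = 0` at an LP optimum. -/


lemma lp_exchange {n : ℕ} (b : ℝ) (a f ytil : Fin n → ℝ)
    (ha0 : ∀ i, 0 < a i)
    (hbox : ∀ i, ytil i ∈ Set.Icc (0:ℝ) 1)
    (hfeas : ∑ i, a i * ytil i ≤ b)
    (hopt : ∀ y : Fin n → ℝ, (∀ i, y i ∈ Set.Icc (0:ℝ) 1) → ∑ i, a i * y i ≤ b →
          ∑ i, (f i * a i) * y i ≤ ∑ i, (f i * a i) * ytil i)
    (i j : Fin n) (hij : f i < f j) (hyj : ytil j < 1) : ytil i = 0 := by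
  by_contra h0
  have hyi : 0 < ytil i := lt_of_le_of_ne (hbox i).1 (Ne.symm h0)
  have hne : i ≠ j := by rintro rfl; exact lt_irrefl _ hij
  set ε' : ℝ := min (1 - ytil j) (ytil i * a i / a j) with hε'
  have hε'pos : 0 < ε' := by
    apply lt_min (by linarith)
    exact div_pos (mul_pos hyi (ha0 i)) (ha0 j)
  set ε : ℝ := ε' * a j / a i with hε
  have hεpos : 0 < ε := div_pos (mul_pos hε'pos (ha0 j)) (ha0 i)
  have hεle : ε ≤ ytil i := by
    rw [hε, div_le_iff₀ (ha0 i)]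
    calc ε' * a j ≤ (ytil i * a i / a j) * a j := by
          apply mul_le_mul_of_nonneg_right (min_le_right _ _) (ha0 j).le
      _ = ytil i * a i := div_mul_cancel₀ _ (ha0 j).ne'
  set y' : Fin n → ℝ := fun m => (ytil m + if m = j then ε' else 0) + if m = i then -ε else 0
    with hy'
  have hbox' : ∀ m, y' m ∈ Set.Icc (0:ℝ) 1 := by
    intro m
    rcases eq_or_ne m j with rfl | hmj
    · simp only [hy', if_pos rfl, if_neg (Ne.symm hne)]
      constructor
      · have := (hbox m).1; simp; linarith
      · have := min_le_left (1 - ytil m) (ytil i * a i / a m); simp; linarith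
    · rcases eq_or_ne m i with rfl | hmi
      · simp only [hy', if_neg hne, if_pos rfl]
        have := (hbox m).2
        constructor
        · simp; linarith
        · simp; linarith
      · simp only [hy', if_neg hmj, if_neg hmi]
        have := hbox m; simpa using this
  have haj : a i * ε = a j * ε' := by
    rw [hε, mul_comm (a i), div_mul_cancel₀ _ (ha0 i).ne', mul_comm]
  have hsum : ∑ m, a m * y' m = ∑ m, a m * ytil m := by
    rw [hy']
    rw [sum_mul_add_ite a (fun m => ytil m + if m = j then ε' else 0) i (-ε)]
    rw [sum_mul_add_ite a ytil j ε']
    simp only [mul_neg]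
    linarith [haj]
  have hval : ∑ m, (f m * a m) * y' m = (∑ m, (f m * a m) * ytil m)
      + a i * ε * (f j - f i) := by
    rw [hy']
    rw [sum_mul_add_ite (fun m => f m * a m)
      (fun m => ytil m + if m = j then ε' else 0) i (-ε)]
    rw [sum_mul_add_ite (fun m => f m * a m) ytil j ε']
    have : f j * a j * ε' = f j * (a i * ε) := by rw [haj]; ring
    rw [this]; ring
  have := hopt y' hbox' (by rw [hsum]; exact hfeas)
  rw [hval] at this
  nlinarith [mul_pos (mul_pos (ha0 i) hεpos) (sub_pos.mpr hij)]


lemma nonbinding_lp {n : ℕ} (b : ℝ) (a f ytil : Fin n → ℝ)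
    (ha0 : ∀ i, 0 < a i) (ha1 : ∀ i, a i ≤ 1) (hf0 : ∀ i, 0 < f i)
    (hbox : ∀ i, ytil i ∈ Set.Icc (0:ℝ) 1)
    (hfeas : ∑ i, a i * ytil i ≤ b)
    (hopt : ∀ y : Fin n → ℝ, (∀ i, y i ∈ Set.Icc (0:ℝ) 1) → ∑ i, a i * y i ≤ b →
          ∑ i, (f i * a i) * y i ≤ ∑ i, (f i * a i) * ytil i)
    (hlt : ∑ i, a i * ytil i < b) : ∀ i, ytil i = 1 := by
  intro i
  by_contra h1
  have hyi : ytil i < 1 := lt_of_le_of_ne (hbox i).2 h1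
  set ε : ℝ := min (1 - ytil i) (b - ∑ m, a m * ytil m) with hεdef
  have hεpos : 0 < ε := lt_min (by linarith) (by linarith)
  set y' : Fin n → ℝ := fun m => ytil m + if m = i then ε else 0 with hy'
  have hbox' : ∀ m, y' m ∈ Set.Icc (0:ℝ) 1 := by
    intro m
    rcases eq_or_ne m i with rfl | hmi
    · simp only [hy', if_pos rfl]
      have h2 := min_le_left (1 - ytil m) (b - ∑ k, a k * ytil k)
      exact ⟨by have := (hbox m).1; simp; linarith, by simp; linarith⟩
    · simp only [hy', if_neg hmi]; simpa using hbox m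
  have hsum : ∑ m, a m * y' m = (∑ m, a m * ytil m) + a i * ε := by
    rw [hy', sum_mul_add_ite]
  have hfeas' : ∑ m, a m * y' m ≤ b := by
    rw [hsum]
    have : a i * ε ≤ 1 * ε := mul_le_mul_of_nonneg_right (ha1 i) hεpos.le
    have h2 := min_le_right (1 - ytil i) (b - ∑ m, a m * ytil m)
    simp only [one_mul] at this
    linarith
  have := hopt y' hbox' hfeas'
  rw [hy', sum_mul_add_ite] at this
  nlinarith [mul_pos (mul_pos (hf0 i) (ha0 i)) hεpos]

/-- If the total weight is below budget, every coordinate of an integer optimum is 1. -/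


lemma nonbinding_int {n : ℕ} (b : ℝ) (a f ystar : Fin n → ℝ)
    (ha0 : ∀ i, 0 < a i) (hf0 : ∀ i, 0 < f i)
    (hbin : ∀ i, ystar i = 0 ∨ ystar i = 1)
    (hopt : ∀ y : Fin n → ℝ, (∀ i, y i = 0 ∨ y i = 1) → ∑ i, a i * y i ≤ b →
          ∑ i, (f i * a i) * y i ≤ ∑ i, (f i * a i) * ystar i)
    (hall : ∑ i, a i < b) : ∀ i, ystar i = 1 := by
  intro i
  rcases hbin i with h0 | h1
  swap; · exact h1
  exfalso
  set y' : Fin n → ℝ := fun m => ystar m + if m = i then 1 else 0 with hy'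
  have hbin' : ∀ m, y' m = 0 ∨ y' m = 1 := by
    intro m
    rcases eq_or_ne m i with rfl | hmi
    · simp only [hy', if_pos rfl, h0]; right; norm_num
    · simp only [hy', if_neg hmi, add_zero]; exact hbin m
  have hfeas' : ∑ m, a m * y' m ≤ b := by
    have hle : ∑ m, a m * y' m ≤ ∑ m, a m := by
      apply Finset.sum_le_sum
      intro m _
      rcases hbin' m with h | h <;> rw [h] <;> nlinarith [ha0 m]
    linarith
  have := hopt y' hbin' hfeas'
  rw [hy', sum_mul_add_ite] at this
  nlinarith [mul_pos (hf0 i) (ha0 i)]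


lemma interval_count {n K : ℕ} (hK : 0 < K) (f : Fin n → ℝ)
    (hf0 : ∀ i, 0 < f i) (hf1 : ∀ i, f i < 1)
    (cap Δ : ℝ) (hcap : 0 ≤ cap)
    (hbuck : ∀ k : ℕ, k < K →
      (((univ : Finset (Fin n)).filter
          (fun i => f i ∈ Set.Ico ((k : ℝ)/K) (((k : ℝ)+1)/K))).card : ℝ) ≤ cap)
    (u v : ℝ) (hu : 0 ≤ u) (huv : u ≤ v) (hΔ : v - u ≤ Δ) :
    (((univ : Finset (Fin n)).filter (fun i => f i ∈ Set.Icc u v)).card : ℝ)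
      ≤ (Δ * K + 2) * cap := by
  classical
  set T : Finset ℕ := (Finset.range K).filter
      (fun k => (k : ℝ)/K ≤ v ∧ u < ((k : ℝ)+1)/K) with hT
  have hKpos : (0:ℝ) < K := by exact_mod_cast hK
  -- subset of the biUnion of relevant buckets
  have hsub : (univ : Finset (Fin n)).filter (fun i => f i ∈ Set.Icc u v)
      ⊆ T.biUnion (fun k => (univ : Finset (Fin n)).filter
          (fun i => f i ∈ Set.Ico ((k : ℝ)/K) (((k : ℝ)+1)/K))) := by
    intro i hi
    simp only [Finset.mem_filter, Finset.mem_univ, true_and, Set.mem_Icc] at hi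
    set k : ℕ := ⌊f i * K⌋₊ with hk
    have hfiK : 0 ≤ f i * K := mul_nonneg (hf0 i).le hKpos.le
    have h1 : (k : ℝ) ≤ f i * K := Nat.floor_le hfiK
    have h2 : f i * K < (k : ℝ) + 1 := Nat.lt_floor_add_one _
    have hkK : k < K := by
      have : f i * K < K := by nlinarith [hf1 i]
      have := h1.trans_lt this
      exact_mod_cast this
    have hlow : (k : ℝ)/K ≤ f i := by rw [div_le_iff₀ hKpos]; linarith
    have hhigh : f i < ((k : ℝ)+1)/K := by rw [lt_div_iff₀ hKpos]; linarith
    apply Finset.mem_biUnion.2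
    refine ⟨k, ?_, ?_⟩
    · simp only [hT, Finset.mem_filter, Finset.mem_range]
      exact ⟨hkK, hlow.trans hi.2, lt_of_le_of_lt hi.1 hhigh⟩
    · simp only [Finset.mem_filter, Finset.mem_univ, true_and, Set.mem_Ico]
      exact ⟨hlow, hhigh⟩
  -- card of T
  have hTcard : (T.card : ℝ) ≤ Δ * K + 2 := by
    have hTsub : T ⊆ Finset.Icc ⌊u * K⌋₊ ⌊v * K⌋₊ := by
      intro k hk
      simp only [hT, Finset.mem_filter, Finset.mem_range] at hk
      obtain ⟨-, hkv, hku⟩ := hk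
      rw [Finset.mem_Icc]
      constructor
      · -- ⌊u*K⌋ ≤ k  since u*K < k+1
        have : u * K < (k : ℝ) + 1 := by
          have := (lt_div_iff₀ hKpos).1 hku
          linarith
        have h3 : (⌊u * K⌋₊ : ℝ) ≤ u * K := Nat.floor_le (mul_nonneg hu hKpos.le)
        have : (⌊u * K⌋₊ : ℝ) < (k:ℝ) + 1 := lt_of_le_of_lt h3 this
        exact_mod_cast Nat.lt_add_one_iff.1 (by exact_mod_cast this)
      · -- k ≤ ⌊v*K⌋ since k ≤ v*K
        apply Nat.le_floor
        have := (div_le_iff₀ hKpos).1 hkv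
        exact_mod_cast this
    have h4 : (T.card : ℝ) ≤ (Finset.Icc ⌊u * K⌋₊ ⌊v * K⌋₊).card := by
      exact_mod_cast Finset.card_le_card hTsub
    rw [Nat.card_Icc] at h4
    rcases le_or_gt ⌊u * K⌋₊ ⌊v * K⌋₊ with hle | hlt
    · have : ((⌊v * K⌋₊ + 1 - ⌊u * K⌋₊ : ℕ) : ℝ)
          = (⌊v * K⌋₊ : ℝ) + 1 - (⌊u * K⌋₊ : ℝ) := by
        have : ⌊u * K⌋₊ ≤ ⌊v * K⌋₊ + 1 := hle.trans (Nat.le_succ _)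
        push_cast [Nat.cast_sub this]
        ring
      rw [this] at h4
      have h5 : (⌊v * K⌋₊ : ℝ) ≤ v * K := Nat.floor_le (mul_nonneg (hu.trans huv) hKpos.le)
      have h6 : u * K - 1 < (⌊u * K⌋₊ : ℝ) := by
        have := Nat.lt_floor_add_one (u * K); linarith
      nlinarith
    · have : ⌊v * K⌋₊ + 1 - ⌊u * K⌋₊ = 0 := by omega
      rw [this] at h4
      norm_num at h4
      rw [h4]
      simp only [Finset.card_empty, Nat.cast_zero]
      nlinarith
  calc (((univ : Finset (Fin n)).filter (fun i => f i ∈ Set.Icc u v)).card : ℝ)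
      ≤ ((T.biUnion (fun k => (univ : Finset (Fin n)).filter
          (fun i => f i ∈ Set.Ico ((k : ℝ)/K) (((k : ℝ)+1)/K)))).card : ℝ) := by
        exact_mod_cast Finset.card_le_card hsub
    _ ≤ ∑ k ∈ T, (((univ : Finset (Fin n)).filter
          (fun i => f i ∈ Set.Ico ((k : ℝ)/K) (((k : ℝ)+1)/K))).card : ℝ) := by
        exact_mod_cast Finset.card_biUnion_le
    _ ≤ ∑ _k ∈ T, cap := by
        apply Finset.sum_le_sum
        intro k hk
        simp only [hT, Finset.mem_filter, Finset.mem_range] at hk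
        exact hbuck k hk.1
    _ = (T.card : ℝ) * cap := by rw [Finset.sum_const, nsmul_eq_mul]
    _ ≤ (Δ * K + 2) * cap := mul_le_mul_of_nonneg_right hTcard hcap


lemma s_facts : (4*Real.sqrt 2)^2 = 32 ∧ (5.65:ℝ) ≤ 4*Real.sqrt 2 := by
  have h2 : (Real.sqrt 2)^2 = 2 := Real.sq_sqrt (by norm_num)
  have h0 : (0:ℝ) ≤ Real.sqrt 2 := Real.sqrt_nonneg 2
  constructor
  · rw [mul_pow, h2]; norm_num
  · nlinarith


lemma numeric_main (x Kr : ℝ) (hx : 4*Real.sqrt 2 ≤ x)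
    (hK1 : 2*x^2 - 1 ≤ Kr) (hK2 : Kr ≤ 2*x^2) :
    (x⁻¹*Kr + 2)*(x^4/Kr + x^2/2) + 2*x^3 + x^2 ≤ 4*Real.sqrt 2 * x^3 := by
  obtain ⟨hs2, hs565⟩ := s_facts
  have hx565 : (5.65:ℝ) ≤ x := hs565.trans hx
  have hx0 : (0:ℝ) < x := by linarith
  have hx32 : 32 ≤ x^2 := by nlinarith
  have hKpos : (0:ℝ) < Kr := by nlinarith
  have h1 : x^4/Kr ≤ (32/63)*x^2 := by
    rw [div_le_iff₀ hKpos]; nlinarith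
  have h2 : x⁻¹*Kr ≤ 2*x := by
    rw [inv_mul_le_iff₀ hx0]; nlinarith
  have hstep : (x⁻¹*Kr + 2)*(x^4/Kr + x^2/2) ≤ (2*x+2)*((32/63)*x^2 + x^2/2) := by
    apply mul_le_mul (by linarith) (by linarith) (by positivity) (by positivity)
  have hfin : (2*x+2)*((32/63)*x^2 + x^2/2) + 2*x^3 + x^2 ≤ 4*Real.sqrt 2 * x^3 := by
    nlinarith [sq_nonneg x, mul_pos hx0 hx0, mul_pos (mul_pos hx0 hx0) hx0]
  linarith


lemma numeric_bucket (x Kr : ℝ) (hx : 4*Real.sqrt 2 ≤ x)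
    (hK1 : 2*x^2 - 1 ≤ Kr) (hK2 : Kr ≤ 2*x^2) :
    x^4/Kr * (1 - Real.log 2) ≤ (x^2/2) * Real.log 2 - x^2/8 := by
  obtain ⟨hs2, hs565⟩ := s_facts
  have hx565 : (5.65:ℝ) ≤ x := hs565.trans hx
  have hx0 : (0:ℝ) < x := by linarith
  have hx32 : 32 ≤ x^2 := by nlinarith
  have hKpos : (0:ℝ) < Kr := by nlinarith
  have h1 : x^4/Kr ≤ (32/63)*x^2 := by
    rw [div_le_iff₀ hKpos]; nlinarith
  have hlog : (0.6931471803:ℝ) < Real.log 2 := Real.log_two_gt_d9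
  have hlog2 : Real.log 2 < 0.6931471808 := Real.log_two_lt_d9
  nlinarith [sq_nonneg x]


lemma s_facts' : (4*Real.sqrt 2)^2 = 32 := by
  have h2 : (Real.sqrt 2)^2 = 2 := Real.sq_sqrt (by norm_num)
  rw [mul_pow, h2]; norm_num


lemma x_facts (n : ℕ) (hn : 1025 ≤ n) :
    0 < (n:ℝ)^((1:ℝ)/4) ∧ ((n:ℝ)^((1:ℝ)/4))^4 = (n:ℝ)
      ∧ ((n:ℝ)^((1:ℝ)/4))^2 = Real.sqrt n
      ∧ ((n:ℝ)^((1:ℝ)/4))^3 = (n:ℝ)^((3:ℝ)/4)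
      ∧ 4*Real.sqrt 2 ≤ (n:ℝ)^((1:ℝ)/4) := by
  have hn0 : (0:ℝ) < n := by
    have : (1025:ℝ) ≤ (n:ℝ) := by exact_mod_cast hn
    linarith
  have hx0 : 0 < (n:ℝ)^((1:ℝ)/4) := Real.rpow_pos_of_pos hn0 _
  have h4 : ((n:ℝ)^((1:ℝ)/4))^4 = (n:ℝ) := by
    rw [← Real.rpow_natCast ((n:ℝ)^((1:ℝ)/4)) 4, ← Real.rpow_mul hn0.le]
    norm_num
  have h2 : ((n:ℝ)^((1:ℝ)/4))^2 = Real.sqrt n := by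
    rw [← Real.rpow_natCast ((n:ℝ)^((1:ℝ)/4)) 2, ← Real.rpow_mul hn0.le,
      Real.sqrt_eq_rpow]
    norm_num
  have h3 : ((n:ℝ)^((1:ℝ)/4))^3 = (n:ℝ)^((3:ℝ)/4) := by
    rw [← Real.rpow_natCast ((n:ℝ)^((1:ℝ)/4)) 3, ← Real.rpow_mul hn0.le]
    norm_num
  refine ⟨hx0, h4, h2, h3, ?_⟩
  by_contra hcon
  push_neg at hcon
  have hs0 : (0:ℝ) ≤ 4*Real.sqrt 2 := by positivity
  have : ((n:ℝ)^((1:ℝ)/4))^4 < (4*Real.sqrt 2)^4 := by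
    apply pow_lt_pow_left₀ hcon hx0.le
    norm_num
  have h1024 : (4*Real.sqrt 2)^4 = 1024 := by
    have := s_facts'
    nlinarith
  rw [h4, h1024] at this
  have : (1025:ℝ) ≤ (n:ℝ) := by exact_mod_cast hn
  linarith

/-- Chernoff-type bound for sums of independent indicators, at `t = log 2`. -/


lemma x_id (n : ℕ) (hn : 1 ≤ n) :
    0 < (n:ℝ)^((1:ℝ)/4) ∧ ((n:ℝ)^((1:ℝ)/4))^4 = (n:ℝ)
      ∧ ((n:ℝ)^((1:ℝ)/4))^3 = (n:ℝ)^((3:ℝ)/4) := by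
  have hn0 : (0:ℝ) < n := by
    have : (1:ℝ) ≤ (n:ℝ) := by exact_mod_cast hn
    linarith
  have hx0 : 0 < (n:ℝ)^((1:ℝ)/4) := Real.rpow_pos_of_pos hn0 _
  have h4 : ((n:ℝ)^((1:ℝ)/4))^4 = (n:ℝ) := by
    rw [← Real.rpow_natCast ((n:ℝ)^((1:ℝ)/4)) 4, ← Real.rpow_mul hn0.le]
    norm_num
  have h3 : ((n:ℝ)^((1:ℝ)/4))^3 = (n:ℝ)^((3:ℝ)/4) := by
    rw [← Real.rpow_natCast ((n:ℝ)^((1:ℝ)/4)) 3, ← Real.rpow_mul hn0.le]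
    norm_num
  exact ⟨hx0, h4, h3⟩


lemma chernoff_general {Ω : Type*} [MeasurableSpace Ω] (μ : Measure Ω)
    [IsProbabilityMeasure μ] {ι : Type*} [Fintype ι]
    (X : ι → Ω → ℝ) (hmeas : ∀ j, Measurable (X j))
    (hind : iIndepFun X μ)
    (T : ι → Set ℝ) (hT : ∀ j, MeasurableSet (T j))
    (p : ι → ℝ) (hp0 : ∀ j, 0 ≤ p j)
    (hp : ∀ j, μ (X j ⁻¹' T j) = ENNReal.ofReal (p j)) (c : ℝ) :
    μ {ω | c ≤ ∑ j, (T j).indicator (fun _ => (1:ℝ)) (X j ω)}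
      ≤ ENNReal.ofReal (Real.exp ((∑ j, p j) - c * Real.log 2)) := by
  classical
  set Z : ι → Ω → ℝ := fun j ω => (T j).indicator (fun _ => (1:ℝ)) (X j ω) with hZ
  have hZmeas : ∀ j, Measurable (Z j) := fun j =>
    (measurable_const.indicator (hT j)).comp (hmeas j)
  have hZind : iIndepFun Z μ :=
    hind.comp (fun j x => (T j).indicator (fun _ => (1:ℝ)) x)
      (fun j => measurable_const.indicator (hT j))
  have hZ01 : ∀ j ω, Z j ω = 0 ∨ Z j ω = 1 := by
    intro j ω
    by_cases h : X j ω ∈ T j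
    · right; simp [hZ, Set.indicator_of_mem h]
    · left; simp [hZ, Set.indicator_of_notMem h]
  set S : Ω → ℝ := ∑ j, Z j with hS
  have hSapp : ∀ ω, S ω = ∑ j, Z j ω := by
    intro ω; rw [hS]; simp [Finset.sum_apply]
  have hSmeas : Measurable S := by
    have : Measurable fun ω => ∑ j, Z j ω := Finset.measurable_sum _ (fun j _ => hZmeas j)
    convert this using 1
    funext ω; exact hSapp ω
  have hlog2 : (0:ℝ) ≤ Real.log 2 := Real.log_nonneg (by norm_num)
  -- integrability
  have hSbound : ∀ ω, S ω ≤ (Fintype.card ι : ℝ) := by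
    intro ω
    rw [hSapp]
    calc ∑ j, Z j ω ≤ ∑ _j : ι, (1:ℝ) := by
          apply Finset.sum_le_sum
          intro j _
          rcases hZ01 j ω with h | h <;> rw [h] <;> norm_num
      _ = (Fintype.card ι : ℝ) := by rw [Finset.sum_const, nsmul_eq_mul, mul_one]; rfl
  have hint : Integrable (fun ω => Real.exp (Real.log 2 * S ω)) μ := by
    apply Integrable.mono' (integrable_const (Real.exp (Real.log 2 * (Fintype.card ι : ℝ))))
    · exact (hSmeas.const_mul _).exp.aestronglyMeasurable
    · apply Filter.Eventually.of_forall
      intro ω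
      rw [Real.norm_eq_abs, abs_of_pos (Real.exp_pos _)]
      exact Real.exp_le_exp.2 (mul_le_mul_of_nonneg_left (hSbound ω) hlog2)
  -- Chernoff via mgf
  have hcher := measure_ge_le_exp_mul_mgf (μ := μ) (X := S) c hlog2 hint
  -- mgf of each Z j at log 2
  have hmgf1 : ∀ j, mgf (Z j) μ (Real.log 2) = 1 + p j := by
    intro j
    have hpt : ∀ ω, Real.exp (Real.log 2 * Z j ω) = 1 + Z j ω := by
      intro ω
      by_cases h : X j ω ∈ T j
      · have h1 : Z j ω = 1 := by simp [hZ, Set.indicator_of_mem h]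
        rw [h1, mul_one, Real.exp_log (by norm_num : (0:ℝ) < 2)]
        norm_num
      · have h1 : Z j ω = 0 := by simp [hZ, Set.indicator_of_notMem h]
        rw [h1, mul_zero, Real.exp_zero]
        norm_num
    have hZint : Integrable (Z j) μ := by
      apply Integrable.mono' (integrable_const (1:ℝ))
      · exact (hZmeas j).aestronglyMeasurable
      · apply Filter.Eventually.of_forall
        intro ω
        rw [Real.norm_eq_abs]
        rcases hZ01 j ω with h | h <;> rw [h] <;> norm_num
    have hmapint : ∫ ω, Z j ω ∂μ = p j := by
      have h1 : ∫ ω, Z j ω ∂μ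
          = ∫ y, (T j).indicator (fun _ => (1:ℝ)) y ∂(μ.map (X j)) := by
        rw [integral_map (hmeas j).aemeasurable]
        exact (measurable_const.indicator (hT j)).aestronglyMeasurable
      have h2 : ∫ y, (T j).indicator (fun _ => (1:ℝ)) y ∂(μ.map (X j))
          = ((μ.map (X j)) (T j)).toReal := by
        have := integral_indicator_one (μ := μ.map (X j)) (hT j)
        exact this
      rw [h1, h2, Measure.map_apply (hmeas j) (hT j), hp j,
        ENNReal.toReal_ofReal (hp0 j)]
    unfold mgf
    calc ∫ ω, Real.exp (Real.log 2 * Z j ω) ∂μ = ∫ ω, (1 + Z j ω) ∂μ := by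
          apply integral_congr_ae
          exact Filter.Eventually.of_forall hpt
      _ = 1 + p j := by
          rw [integral_add (integrable_const 1) hZint]
          simp [hmapint]
  have hmgfS : mgf S μ (Real.log 2) = ∏ j, mgf (Z j) μ (Real.log 2) := by
    rw [hS]
    exact hZind.mgf_sum hZmeas Finset.univ
  have hprod : ∏ j, mgf (Z j) μ (Real.log 2) ≤ Real.exp (∑ j, p j) := by
    rw [Real.exp_sum]
    apply Finset.prod_le_prod
    · intro j _; rw [hmgf1 j]; linarith [hp0 j]
    · intro j _; rw [hmgf1 j]
      have := Real.add_one_le_exp (p j)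
      linarith
  -- combine
  have htoReal : (μ {ω | c ≤ S ω}).toReal
      ≤ Real.exp ((∑ j, p j) - c * Real.log 2) := by
    calc (μ {ω | c ≤ S ω}).toReal ≤ Real.exp (-(Real.log 2) * c) * mgf S μ (Real.log 2) :=
          hcher
      _ ≤ Real.exp (-(Real.log 2) * c) * Real.exp (∑ j, p j) := by
          apply mul_le_mul_of_nonneg_left _ (Real.exp_pos _).le
          rw [hmgfS]; exact hprod
      _ = Real.exp ((∑ j, p j) - c * Real.log 2) := by
          rw [← Real.exp_add]; ring_nf
  have hfin : μ {ω | c ≤ S ω} ≠ ⊤ := measure_ne_top _ _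
  have : μ {ω | c ≤ S ω} = ENNReal.ofReal ((μ {ω | c ≤ S ω}).toReal) := by
    rw [ENNReal.ofReal_toReal hfin]
  rw [show {ω | c ≤ ∑ j, (T j).indicator (fun _ => (1:ℝ)) (X j ω)} = {ω | c ≤ S ω} by
    ext ω; simp [hSapp, hZ]]
  rw [this]
  exact ENNReal.ofReal_le_ofReal htoReal


lemma numeric_a (x : ℝ) (hx : 4*Real.sqrt 2 ≤ x) :
    x^4*x⁻¹ - 2*x^3*Real.log 2 ≤ -(x^2)/8 := by
  obtain ⟨hs2, hs565⟩ := s_facts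
  have hx565 : (5.65:ℝ) ≤ x := hs565.trans hx
  have hx0 : (0:ℝ) < x := by linarith
  have h1 : x^4*x⁻¹ = x^3 := by
    field_simp
  rw [h1]
  have hlog : (0.6931471803:ℝ) < Real.log 2 := Real.log_two_gt_d9
  nlinarith [sq_nonneg x, mul_pos hx0 hx0, mul_pos (mul_pos hx0 hx0) hx0]


lemma chernoff_right {Ω : Type*} [MeasurableSpace Ω] (μ : Measure Ω)
    [IsProbabilityMeasure μ] {n : ℕ} (a f : Fin n → Ω → ℝ)
    (hameas : ∀ i, Measurable (a i)) (hfmeas : ∀ i, Measurable (f i))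
    (hind : iIndepFun (Sum.elim a f) μ)
    (I : Set ℝ) (hI : MeasurableSet I) (p : ℝ) (hp0 : 0 ≤ p)
    (hp : ∀ i, μ (f i ⁻¹' I) = ENNReal.ofReal p) (c : ℝ) :
    μ {ω | c ≤ ∑ i, I.indicator (fun _ => (1:ℝ)) (f i ω)}
      ≤ ENNReal.ofReal (Real.exp ((n:ℝ)*p - c*Real.log 2)) := by
  classical
  have hmeas : ∀ j : Fin n ⊕ Fin n, Measurable (Sum.elim a f j) := by
    rintro (i|i)
    exacts [hameas i, hfmeas i]
  set T : Fin n ⊕ Fin n → Set ℝ := Sum.elim (fun _ => (∅ : Set ℝ)) (fun _ => I) with hTd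
  set q : Fin n ⊕ Fin n → ℝ := Sum.elim (fun _ => 0) (fun _ => p) with hqd
  have hT : ∀ j, MeasurableSet (T j) := by
    rintro (i|i)
    · exact MeasurableSet.empty
    · exact hI
  have hq0 : ∀ j, 0 ≤ q j := by rintro (i|i); exacts [le_refl 0, hp0]
  have hq : ∀ j, μ (Sum.elim a f j ⁻¹' T j) = ENNReal.ofReal (q j) := by
    rintro (i|i)
    · simp [hTd, hqd]
    · simpa [hTd, hqd] using hp i
  have h := chernoff_general μ (Sum.elim a f) hmeas hind T hT q hq0 hq c
  have hsum : ∀ ω, ∑ j, (T j).indicator (fun _ => (1:ℝ)) (Sum.elim a f j ω)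
      = ∑ i, I.indicator (fun _ => (1:ℝ)) (f i ω) := by
    intro ω
    rw [Fintype.sum_sum_type]
    simp [hTd]
  have hqsum : ∑ j, q j = (n:ℝ)*p := by
    rw [Fintype.sum_sum_type]
    simp [hqd, Finset.sum_const, mul_comm]
  rw [show {ω | c ≤ ∑ j, (T j).indicator (fun _ => (1:ℝ)) (Sum.elim a f j ω)}
      = {ω | c ≤ ∑ i, I.indicator (fun _ => (1:ℝ)) (f i ω)} by
    ext ω; rw [Set.mem_setOf_eq, Set.mem_setOf_eq, hsum], hqsum] at h
  exact h


lemma chernoff_left {Ω : Type*} [MeasurableSpace Ω] (μ : Measure Ω)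
    [IsProbabilityMeasure μ] {n : ℕ} (a f : Fin n → Ω → ℝ)
    (hameas : ∀ i, Measurable (a i)) (hfmeas : ∀ i, Measurable (f i))
    (hind : iIndepFun (Sum.elim a f) μ)
    (I : Set ℝ) (hI : MeasurableSet I) (p : ℝ) (hp0 : 0 ≤ p)
    (hp : ∀ i, μ (a i ⁻¹' I) = ENNReal.ofReal p) (c : ℝ) :
    μ {ω | c ≤ ∑ i, I.indicator (fun _ => (1:ℝ)) (a i ω)}
      ≤ ENNReal.ofReal (Real.exp ((n:ℝ)*p - c*Real.log 2)) := by
  classical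
  have hmeas : ∀ j : Fin n ⊕ Fin n, Measurable (Sum.elim a f j) := by
    rintro (i|i)
    exacts [hameas i, hfmeas i]
  set T : Fin n ⊕ Fin n → Set ℝ := Sum.elim (fun _ => I) (fun _ => (∅ : Set ℝ)) with hTd
  set q : Fin n ⊕ Fin n → ℝ := Sum.elim (fun _ => p) (fun _ => 0) with hqd
  have hT : ∀ j, MeasurableSet (T j) := by
    rintro (i|i)
    · exact hI
    · exact MeasurableSet.empty
  have hq0 : ∀ j, 0 ≤ q j := by rintro (i|i); exacts [hp0, le_refl 0]
  have hq : ∀ j, μ (Sum.elim a f j ⁻¹' T j) = ENNReal.ofReal (q j) := by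
    rintro (i|i)
    · simpa [hTd, hqd] using hp i
    · simp [hTd, hqd]
  have h := chernoff_general μ (Sum.elim a f) hmeas hind T hT q hq0 hq c
  have hsum : ∀ ω, ∑ j, (T j).indicator (fun _ => (1:ℝ)) (Sum.elim a f j ω)
      = ∑ i, I.indicator (fun _ => (1:ℝ)) (a i ω) := by
    intro ω
    rw [Fintype.sum_sum_type]
    simp [hTd]
  have hqsum : ∑ j, q j = (n:ℝ)*p := by
    rw [Fintype.sum_sum_type]
    simp [hqd, Finset.sum_const, mul_comm]
  rw [show {ω | c ≤ ∑ j, (T j).indicator (fun _ => (1:ℝ)) (Sum.elim a f j ω)}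
      = {ω | c ≤ ∑ i, I.indicator (fun _ => (1:ℝ)) (a i ω)} by
    ext ω; rw [Set.mem_setOf_eq, Set.mem_setOf_eq, hsum], hqsum] at h
  exact h


lemma as_null {Ω : Type*} [MeasurableSpace Ω] (μ : Measure Ω)
    [IsProbabilityMeasure μ] {n : ℕ} (a f : Fin n → Ω → ℝ)
    (hameas : ∀ i, Measurable (a i)) (hfmeas : ∀ i, Measurable (f i))
    (haunif : ∀ i, μ.map (a i) = volume.restrict (Set.Icc (0 : ℝ) 1))
    (hfunif : ∀ i, μ.map (f i) = volume.restrict (Set.Icc (0 : ℝ) 1)) :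
    μ ({ω | ∀ i, (a i ω ∈ Set.Ioc (0:ℝ) 1) ∧ (f i ω ∈ Set.Ioo (0:ℝ) 1)}ᶜ) = 0 := by
  have hsub : {ω | ∀ i, (a i ω ∈ Set.Ioc (0:ℝ) 1) ∧ (f i ω ∈ Set.Ioo (0:ℝ) 1)}ᶜ
      ⊆ ⋃ i, ((a i ⁻¹' (Set.Ioc (0:ℝ) 1)ᶜ) ∪ (f i ⁻¹' (Set.Ioo (0:ℝ) 1)ᶜ)) := by
    intro ω hω
    simp only [Set.mem_compl_iff, Set.mem_setOf_eq, not_forall] at hω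
    obtain ⟨i, hi⟩ := hω
    rw [not_and_or] at hi
    apply Set.mem_iUnion.2
    refine ⟨i, ?_⟩
    rcases hi with h | h
    · exact Set.mem_union_left _ h
    · exact Set.mem_union_right _ h
  apply measure_mono_null hsub
  apply measure_iUnion_null
  intro i
  apply measure_union_null
  · rw [← Measure.map_apply (hameas i) measurableSet_Ioc.compl, haunif i,
      Measure.restrict_apply measurableSet_Ioc.compl]
    apply measure_mono_null (t := {(0:ℝ)})
    · intro z hz
      obtain ⟨hz1, hz2⟩ := hz
      simp only [Set.mem_compl_iff, Set.mem_Ioc, not_and_or, not_lt, not_le] at hz1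
      simp only [Set.mem_Icc] at hz2
      simp only [Set.mem_singleton_iff]
      rcases hz1 with h | h
      · linarith [hz2.1]
      · linarith [hz2.2]
    · exact measure_singleton 0
  · rw [← Measure.map_apply (hfmeas i) measurableSet_Ioo.compl, hfunif i,
      Measure.restrict_apply measurableSet_Ioo.compl]
    apply measure_mono_null (t := ({0, 1} : Set ℝ))
    · intro z hz
      obtain ⟨hz1, hz2⟩ := hz
      simp only [Set.mem_compl_iff, Set.mem_Ioo, not_and_or, not_lt] at hz1
      simp only [Set.mem_Icc] at hz2
      simp only [Set.mem_insert_iff, Set.mem_singleton_iff]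
      rcases hz1 with h | h
      · left; linarith [hz2.1]
      · right; linarith [hz2.2]
    · exact Set.Countable.measure_zero (Set.toFinite _).countable _


/-- The deterministic core of Theorem 4.1. -/
lemma det_core (n K : ℕ) (hn : 1025 ≤ n)
    (hK1 : 2*Real.sqrt n - 1 ≤ (K:ℝ)) (hK2 : (K:ℝ) ≤ 2*Real.sqrt n)
    (b : ℝ) (a f : Fin n → ℝ)
    (ha0 : ∀ i, 0 < a i) (ha1 : ∀ i, a i ≤ 1)
    (hf0 : ∀ i, 0 < f i) (hf1 : ∀ i, f i < 1)
    (hbuck : ∀ k : ℕ, k < K →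
      (((univ : Finset (Fin n)).filter
          (fun i => f i ∈ Set.Ico ((k : ℝ)/K) (((k : ℝ)+1)/K))).card : ℝ)
        ≤ (n:ℝ)/K + Real.sqrt n/2)
    (hA : (((univ : Finset (Fin n)).filter
          (fun i => a i ≤ ((n:ℝ)^((1:ℝ)/4))⁻¹)).card : ℝ) ≤ 2*(n:ℝ)^((3:ℝ)/4))
    (ystar : Fin n → ℝ) (hbin : ∀ i, ystar i = 0 ∨ ystar i = 1)
    (hifeas : ∑ i, a i * ystar i ≤ b)
    (hiopt : ∀ y : Fin n → ℝ, (∀ i, y i = 0 ∨ y i = 1) → ∑ i, a i * y i ≤ b →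
          ∑ i, (f i * a i) * y i ≤ ∑ i, (f i * a i) * ystar i)
    (ytil : Fin n → ℝ) (hbox : ∀ i, ytil i ∈ Set.Icc (0:ℝ) 1)
    (hlfeas : ∑ i, a i * ytil i ≤ b)
    (hlopt : ∀ y : Fin n → ℝ, (∀ i, y i ∈ Set.Icc (0:ℝ) 1) → ∑ i, a i * y i ≤ b →
          ∑ i, (f i * a i) * y i ≤ ∑ i, (f i * a i) * ytil i)
    (hfrac : {i | ytil i ∈ Set.Ioo (0:ℝ) 1}.Subsingleton) :
    ((((univ : Finset (Fin n)).filter (fun i => ytil i = 1)).card : ℝ)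
        - 4 * Real.sqrt 2 * (n : ℝ) ^ ((3 : ℝ) / 4)
      ≤ ∑ i ∈ (univ : Finset (Fin n)).filter (fun i => ytil i = 1), ystar i) ∧
    (∑ i ∈ (univ : Finset (Fin n)).filter (fun i => ytil i = 0), ystar i
      ≤ 4 * Real.sqrt 2 * (n : ℝ) ^ ((3 : ℝ) / 4)) := by
  classical
  obtain ⟨hx0, hx4, hx2, hx3, hxs⟩ := x_facts n hn
  set x : ℝ := (n:ℝ)^((1:ℝ)/4) with hxdef
  obtain ⟨hs2, hs565⟩ := s_facts
  have hx565 : (5.65:ℝ) ≤ x := hs565.trans hxs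
  have hsqn : Real.sqrt n = x^2 := hx2.symm
  have hx32 : 32 ≤ x^2 := by nlinarith
  have hKposℕ : 0 < K := by
    have : (0:ℝ) < K := by rw [hsqn] at hK1; nlinarith
    exact_mod_cast this
  have hb34 : (0:ℝ) < 4 * Real.sqrt 2 * (n : ℝ) ^ ((3 : ℝ) / 4) := by
    rw [← hx3]; positivity
  set U : Finset (Fin n) := (univ : Finset (Fin n)).filter (fun i => ytil i = 1) with hU
  set L : Finset (Fin n) := (univ : Finset (Fin n)).filter (fun i => ytil i = 0) with hL
  set D1 : Finset (Fin n) :=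
    (univ : Finset (Fin n)).filter (fun i => ytil i = 1 ∧ ystar i = 0) with hD1
  set D2 : Finset (Fin n) :=
    (univ : Finset (Fin n)).filter (fun i => ytil i = 0 ∧ ystar i = 1) with hD2
  -- sum over U in terms of cards
  have hUsum : ∑ i ∈ U, ystar i = (U.card : ℝ) - (D1.card : ℝ) := by
    have h1 : ∀ i ∈ U, ystar i = 1 - (if ystar i = 0 then (1:ℝ) else 0) := by
      intro i _
      rcases hbin i with h | h <;> simp [h]
    rw [Finset.sum_congr rfl h1, Finset.sum_sub_distrib]
    simp only [Finset.sum_const, nsmul_eq_mul, mul_one]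
    congr 1
    rw [Finset.sum_boole, hU, Finset.filter_filter]
  have hLsum : ∑ i ∈ L, ystar i = (D2.card : ℝ) := by
    have h1 : ∀ i ∈ L, ystar i = (if ystar i = 1 then (1:ℝ) else 0) := by
      intro i _
      rcases hbin i with h | h <;> simp [h]
    rw [Finset.sum_congr rfl h1, Finset.sum_boole, hL, Finset.filter_filter]
  -- it suffices to bound the two defect cards
  suffices hcards : (D1.card : ℝ) ≤ 4 * Real.sqrt 2 * (n : ℝ) ^ ((3 : ℝ) / 4)
      ∧ (D2.card : ℝ) ≤ 4 * Real.sqrt 2 * (n : ℝ) ^ ((3 : ℝ) / 4) by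
    constructor
    · rw [hUsum]; linarith [hcards.1]
    · rw [hLsum]; exact hcards.2
  -- binding vs nonbinding
  rcases lt_or_eq_of_le hlfeas with hlt | hbindeq
  · -- slack budget: everything is 1
    have h1 : ∀ i, ytil i = 1 := nonbinding_lp b a f ytil ha0 ha1 hf0 hbox hlfeas hlopt hlt
    have hall : ∑ i, a i < b := by
      have : ∑ i, a i * ytil i = ∑ i, a i := by
        apply Finset.sum_congr rfl; intro i _; rw [h1 i, mul_one]
      linarith [this ▸ hlt]
    have h2 : ∀ i, ystar i = 1 := nonbinding_int b a f ystar ha0 hf0 hbin hiopt hall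
    have hD1e : D1 = ∅ := by
      rw [hD1, Finset.filter_eq_empty_iff]
      intro i _
      rw [h2 i]; intro h; exact one_ne_zero h.2
    have hD2e : D2 = ∅ := by
      rw [hD2, Finset.filter_eq_empty_iff]
      intro i _
      rw [h1 i]; intro h; exact one_ne_zero h.1
    rw [hD1e, hD2e]
    simp only [Finset.card_empty, Nat.cast_zero]
    exact ⟨hb34.le, hb34.le⟩
  · -- binding case
    -- threshold lam
    obtain ⟨lam, hlam0, hlamle, hlam2⟩ :
        ∃ lam : ℝ, 0 ≤ lam ∧ (∀ i, ytil i < 1 → f i ≤ lam) ∧ (∀ i, f i < lam → ytil i = 0) := by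
      by_cases hne : ∃ j, ytil j < 1
      · obtain ⟨j0, hj0⟩ := hne
        have hsne : ((univ : Finset (Fin n)).filter (fun i => ytil i < 1)).Nonempty :=
          ⟨j0, by simp [hj0]⟩
        obtain ⟨j1, hj1mem, hj1max⟩ := Finset.exists_max_image _ f hsne
        simp only [Finset.mem_filter, Finset.mem_univ, true_and] at hj1mem
        refine ⟨f j1, (hf0 j1).le, ?_, ?_⟩
        · intro i hi
          exact hj1max i (by simp [hi])
        · intro i hi
          exact lp_exchange b a f ytil ha0 hbox hlfeas hlopt i j1 hi hj1mem
      · push_neg at hne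
        refine ⟨0, le_refl _, ?_, ?_⟩
        · intro i hi; exact absurd hi (not_lt.mpr (hne i))
        · intro i hi; exact absurd hi (not_lt.mpr (hf0 i).le)
    have hyt1 : ∀ i, lam < f i → ytil i = 1 := by
      intro i hi
      by_contra h1
      exact absurd (hlamle i (lt_of_le_of_ne (hbox i).2 h1)) (not_le.mpr hi)
    -- gap bound
    have hboxstar : ∀ i, ystar i ∈ Set.Icc (0:ℝ) 1 := by
      intro i; rcases hbin i with h | h <;> rw [h] <;> norm_num
    have hG0 : ∑ i, (f i * a i) * ystar i ≤ ∑ i, (f i * a i) * ytil i :=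
      hlopt ystar hboxstar hifeas
    have hGle : ∑ i, (f i * a i) * ytil i - ∑ i, (f i * a i) * ystar i ≤ 1 := by
      set y' : Fin n → ℝ := fun i => if ytil i = 1 then (1:ℝ) else 0 with hy'
      have hbin' : ∀ i, y' i = 0 ∨ y' i = 1 := by
        intro i; by_cases h : ytil i = 1 <;> simp [hy', h]
      have hfe' : ∑ i, a i * y' i ≤ b := by
        have hle : ∑ i, a i * y' i ≤ ∑ i, a i * ytil i := by
          apply Finset.sum_le_sum
          intro i _
          by_cases h : ytil i = 1
          · simp [hy', h]
          · simp only [hy', if_neg h, mul_zero]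
            exact mul_nonneg (ha0 i).le (hbox i).1
        linarith
      have h5 := hiopt y' hbin' hfe'
      set F : Finset (Fin n) :=
        (univ : Finset (Fin n)).filter (fun i => ytil i ≠ 1 ∧ ytil i ≠ 0) with hF
      have hcardF : F.card ≤ 1 := by
        apply Finset.card_le_one.2
        intro i hi j hj
        simp only [hF, Finset.mem_filter, Finset.mem_univ, true_and] at hi hj
        have hiI : ytil i ∈ Set.Ioo (0:ℝ) 1 :=
          ⟨lt_of_le_of_ne (hbox i).1 (Ne.symm hi.2), lt_of_le_of_ne (hbox i).2 hi.1⟩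
        have hjI : ytil j ∈ Set.Ioo (0:ℝ) 1 :=
          ⟨lt_of_le_of_ne (hbox j).1 (Ne.symm hj.2), lt_of_le_of_ne (hbox j).2 hj.1⟩
        exact hfrac hiI hjI
      have hsplit : ∑ i, ((f i * a i) * ytil i - (f i * a i) * y' i)
          = ∑ i ∈ F, ((f i * a i) * ytil i - (f i * a i) * y' i) := by
        symm
        apply Finset.sum_subset (Finset.subset_univ F)
        intro i _ hiF
        simp only [hF, Finset.mem_filter, Finset.mem_univ, true_and, not_and_or,
          not_not] at hiF
        rcases hiF with h | h
        · simp [hy', h]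
        · simp [hy', h, if_neg (show (0:ℝ) ≠ 1 by norm_num)]
      have hFbound : ∑ i ∈ F, ((f i * a i) * ytil i - (f i * a i) * y' i) ≤ (F.card : ℝ) := by
        have : ∀ i ∈ F, (f i * a i) * ytil i - (f i * a i) * y' i ≤ 1 := by
          intro i hi
          simp only [hF, Finset.mem_filter, Finset.mem_univ, true_and] at hi
          rw [hy']
          simp only [if_neg hi.1, mul_zero, sub_zero]
          have hca : f i * a i ≤ 1 := by nlinarith [hf0 i, ha0 i, hf1 i, ha1 i]
          have := (hbox i).2
          nlinarith [(hbox i).1, mul_pos (hf0 i) (ha0 i)]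
        calc ∑ i ∈ F, ((f i * a i) * ytil i - (f i * a i) * y' i) ≤ ∑ _i ∈ F, (1:ℝ) :=
              Finset.sum_le_sum this
          _ = (F.card : ℝ) := by simp
      have hc1 : ((F.card : ℕ) : ℝ) ≤ 1 := by exact_mod_cast hcardF
      have hsum1 : ∑ i, (f i * a i) * ytil i - ∑ i, (f i * a i) * y' i ≤ 1 := by
        rw [← Finset.sum_sub_distrib, hsplit]
        linarith
      linarith
    -- the key nonnegative sum
    set key : Fin n → ℝ := fun i => (a i * (f i - lam)) * (ytil i - ystar i) with hkey
    have hterm : ∀ i, 0 ≤ key i := by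
      intro i
      rcases lt_trichotomy (f i) lam with h | h | h
      · have h0 : ytil i = 0 := hlam2 i h
        have : ytil i - ystar i ≤ 0 := by rw [h0]; linarith [(hboxstar i).1]
        have h2 : a i * (f i - lam) ≤ 0 := by nlinarith [ha0 i]
        have h3 := mul_nonneg (neg_nonneg.2 h2) (neg_nonneg.2 this)
        rw [neg_mul_neg] at h3
        rw [hkey]; exact h3
      · rw [hkey]; simp [h]
      · have h1 : ytil i = 1 := hyt1 i h
        have : 0 ≤ ytil i - ystar i := by rw [h1]; linarith [(hboxstar i).2]
        have h2 : 0 ≤ a i * (f i - lam) := by nlinarith [ha0 i]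
        rw [hkey]; exact mul_nonneg h2 this
    have hkeysum : ∑ i, key i ≤ 1 := by
      have hexp : ∑ i, key i
          = (∑ i, (f i * a i) * ytil i - ∑ i, (f i * a i) * ystar i)
            - lam * ((∑ i, a i * ytil i) - (∑ i, a i * ystar i)) := by
        have h1 : ∀ i ∈ (univ : Finset (Fin n)), key i
            = ((f i * a i) * ytil i - (f i * a i) * ystar i)
              - lam * ((a i * ytil i) - (a i * ystar i)) := by
          intro i _; rw [hkey]; ring
        rw [Finset.sum_congr rfl h1, Finset.sum_sub_distrib, ← Finset.mul_sum,
          Finset.sum_sub_distrib, Finset.sum_sub_distrib]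
      rw [hexp, hbindeq]
      have : 0 ≤ lam * (b - ∑ i, a i * ystar i) := mul_nonneg hlam0 (by linarith)
      linarith
    -- counting
    have hKc1 : 2*x^2 - 1 ≤ (K:ℝ) := by rw [hsqn] at hK1; exact hK1
    have hKc2 : (K:ℝ) ≤ 2*x^2 := by rw [hsqn] at hK2; exact hK2
    have hcap0 : (0:ℝ) ≤ (n:ℝ)/K + Real.sqrt n/2 := by positivity
    have hxinv0 : (0:ℝ) < x⁻¹ := by positivity
    have hnum : (x⁻¹*(K:ℝ) + 2)*((n:ℝ)/K + Real.sqrt n/2) + 2*(n:ℝ)^((3:ℝ)/4) + x^2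
        ≤ 4*Real.sqrt 2*(n:ℝ)^((3:ℝ)/4) := by
      rw [hsqn, ← hx3, ← hx4]
      exact numeric_main x K hxs hKc1 hKc2
    have hE3gen : ∀ E3 : Finset (Fin n), (∀ i ∈ E3, x⁻¹*x⁻¹ ≤ key i) → (E3.card : ℝ) ≤ x^2 := by
      intro E3 hE3
      have h2 : (E3.card:ℝ) * (x⁻¹*x⁻¹) ≤ 1 := by
        calc (E3.card:ℝ) * (x⁻¹*x⁻¹) = ∑ _i ∈ E3, (x⁻¹*x⁻¹) := by
              rw [Finset.sum_const, nsmul_eq_mul]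
          _ ≤ ∑ i ∈ E3, key i := Finset.sum_le_sum hE3
          _ ≤ ∑ i, key i := Finset.sum_le_sum_of_subset_of_nonneg (Finset.subset_univ _)
              (fun i _ _ => hterm i)
          _ ≤ 1 := hkeysum
      have hq : (E3.card:ℝ) = ((E3.card:ℝ) * (x⁻¹*x⁻¹))*(x*x) := by field_simp
      calc (E3.card:ℝ) = ((E3.card:ℝ) * (x⁻¹*x⁻¹))*(x*x) := hq
        _ ≤ 1*(x*x) := mul_le_mul_of_nonneg_right h2 (by positivity)
        _ = x^2 := by ring
    constructor
    · -- D1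
      set E1 : Finset (Fin n) := (univ : Finset (Fin n)).filter
        (fun i => f i ∈ Set.Icc lam (lam + x⁻¹)) with hE1
      set E2 : Finset (Fin n) := (univ : Finset (Fin n)).filter
        (fun i => a i ≤ x⁻¹) with hE2
      set E3 : Finset (Fin n) := (univ : Finset (Fin n)).filter
        (fun i => ytil i = 1 ∧ ystar i = 0 ∧ lam + x⁻¹ < f i ∧ x⁻¹ < a i) with hE3d
      have hsub : D1 ⊆ E1 ∪ E2 ∪ E3 := by
        intro i hi
        simp only [hD1, Finset.mem_filter, Finset.mem_univ, true_and] at hi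
        have hfl : lam ≤ f i := by
          by_contra hcon
          have := hlam2 i (not_le.1 hcon)
          rw [hi.1] at this; exact one_ne_zero this
        rw [Finset.mem_union, Finset.mem_union]
        by_cases hc1 : f i ≤ lam + x⁻¹
        · left; left
          simp only [hE1, Finset.mem_filter, Finset.mem_univ, true_and, Set.mem_Icc]
          exact ⟨hfl, hc1⟩
        · by_cases hc2 : a i ≤ x⁻¹
          · left; right
            simp only [hE2, Finset.mem_filter, Finset.mem_univ, true_and]
            exact hc2
          · right
            simp only [hE3d, Finset.mem_filter, Finset.mem_univ, true_and]
            exact ⟨hi.1, hi.2, not_le.1 hc1, not_le.1 hc2⟩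
      have hE3card : (E3.card : ℝ) ≤ x^2 := by
        apply hE3gen
        intro i hi
        simp only [hE3d, Finset.mem_filter, Finset.mem_univ, true_and] at hi
        obtain ⟨h1, h0, hfgt, hagt⟩ := hi
        have : key i = a i * (f i - lam) := by simp only [hkey]; rw [h1, h0]; ring
        rw [this]
        apply mul_le_mul hagt.le (by linarith) hxinv0.le (ha0 i).le
      have hE1card : (E1.card : ℝ) ≤ (x⁻¹*(K:ℝ) + 2)*((n:ℝ)/K + Real.sqrt n/2) := by
        exact interval_count hKposℕ f hf0 hf1 _ _ hcap0 hbuck lam (lam + x⁻¹)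
          hlam0 (by linarith) (by linarith)
      have hcd : (D1.card : ℝ) ≤ (E1.card : ℝ) + (E2.card : ℝ) + (E3.card : ℝ) := by
        have h1 : D1.card ≤ (E1 ∪ E2 ∪ E3).card := Finset.card_le_card hsub
        have h2 : (E1 ∪ E2 ∪ E3).card ≤ E1.card + E2.card + E3.card :=
          le_trans (Finset.card_union_le _ _)
            (Nat.add_le_add_right (Finset.card_union_le _ _) _)
        exact_mod_cast h1.trans h2
      have hE2card : (E2.card : ℝ) ≤ 2*(n:ℝ)^((3:ℝ)/4) := hA
      linarith
    · -- D2
      set u' : ℝ := max (lam - x⁻¹) 0 with hu'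
      set E1 : Finset (Fin n) := (univ : Finset (Fin n)).filter
        (fun i => f i ∈ Set.Icc u' lam) with hE1
      set E2 : Finset (Fin n) := (univ : Finset (Fin n)).filter
        (fun i => a i ≤ x⁻¹) with hE2
      set E3 : Finset (Fin n) := (univ : Finset (Fin n)).filter
        (fun i => ytil i = 0 ∧ ystar i = 1 ∧ f i < lam - x⁻¹ ∧ x⁻¹ < a i) with hE3d
      have hsub : D2 ⊆ E1 ∪ E2 ∪ E3 := by
        intro i hi
        simp only [hD2, Finset.mem_filter, Finset.mem_univ, true_and] at hi
        have hfl : f i ≤ lam := hlamle i (by rw [hi.1]; norm_num)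
        rw [Finset.mem_union, Finset.mem_union]
        by_cases hc1 : lam - x⁻¹ ≤ f i
        · left; left
          simp only [hE1, Finset.mem_filter, Finset.mem_univ, true_and, Set.mem_Icc]
          exact ⟨max_le hc1 (hf0 i).le, hfl⟩
        · by_cases hc2 : a i ≤ x⁻¹
          · left; right
            simp only [hE2, Finset.mem_filter, Finset.mem_univ, true_and]
            exact hc2
          · right
            simp only [hE3d, Finset.mem_filter, Finset.mem_univ, true_and]
            exact ⟨hi.1, hi.2, not_le.1 hc1, not_le.1 hc2⟩
      have hE3card : (E3.card : ℝ) ≤ x^2 := by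
        apply hE3gen
        intro i hi
        simp only [hE3d, Finset.mem_filter, Finset.mem_univ, true_and] at hi
        obtain ⟨h0, h1, hflt, hagt⟩ := hi
        have : key i = a i * (lam - f i) := by simp only [hkey]; rw [h0, h1]; ring
        rw [this]
        apply mul_le_mul hagt.le (by linarith) hxinv0.le (ha0 i).le
      have hE1card : (E1.card : ℝ) ≤ (x⁻¹*(K:ℝ) + 2)*((n:ℝ)/K + Real.sqrt n/2) := by
        apply interval_count hKposℕ f hf0 hf1 _ _ hcap0 hbuck u' lam
          (le_max_right _ _) (max_le (by linarith) hlam0)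
        rcases le_or_gt 0 (lam - x⁻¹) with hc | hc
        · rw [hu', max_eq_left hc]; linarith
        · rw [hu', max_eq_right hc.le]; linarith
      have hcd : (D2.card : ℝ) ≤ (E1.card : ℝ) + (E2.card : ℝ) + (E3.card : ℝ) := by
        have h1 : D2.card ≤ (E1 ∪ E2 ∪ E3).card := Finset.card_le_card hsub
        have h2 : (E1 ∪ E2 ∪ E3).card ≤ E1.card + E2.card + E3.card :=
          le_trans (Finset.card_union_le _ _)
            (Nat.add_le_add_right (Finset.card_union_le _ _) _)
        exact_mod_cast h1.trans h2
      have hE2card : (E2.card : ℝ) ≤ 2*(n:ℝ)^((3:ℝ)/4) := hA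
      linarith

end PMVBaux

open PMVBaux

/-- Theorem 4.1: data-free PMVB for the knapsack problem. -/
theorem data_free_pmvb_knapsack
    {Ω : Type*} [MeasurableSpace Ω] (μ : Measure Ω) [IsProbabilityMeasure μ]
    (n : ℕ) (hn : 1 ≤ n) (γ : ℝ) (hγ : γ ∈ Set.Ioo (0 : ℝ) (1 / 2))
    (b : ℝ) (hb : b = γ * n)
    (a f : Fin n → Ω → ℝ)
    (hameas : ∀ i, Measurable (a i)) (hfmeas : ∀ i, Measurable (f i))
    (hind : iIndepFun (Sum.elim a f) μ)
    (haunif : ∀ i, μ.map (a i) = volume.restrict (Set.Icc (0 : ℝ) 1))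
    (hfunif : ∀ i, μ.map (f i) = volume.restrict (Set.Icc (0 : ℝ) 1)) :
    1 - (⌈2 * Real.sqrt n⌉₊ : ℝ≥0∞) * ENNReal.ofReal (Real.exp (-Real.sqrt n / 8)) ≤
      μ {ω | ∀ ystar : Fin n → ℝ,
        (∀ i, ystar i = 0 ∨ ystar i = 1) →
        (∑ i, a i ω * ystar i ≤ b) →
        (∀ y : Fin n → ℝ, (∀ i, y i = 0 ∨ y i = 1) → ∑ i, a i ω * y i ≤ b →
          ∑ i, (f i ω * a i ω) * y i ≤ ∑ i, (f i ω * a i ω) * ystar i) →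
        ∀ ytil : Fin n → ℝ,
        (∀ i, ytil i ∈ Set.Icc (0 : ℝ) 1) →
        (∑ i, a i ω * ytil i ≤ b) →
        (∀ y : Fin n → ℝ, (∀ i, y i ∈ Set.Icc (0 : ℝ) 1) → ∑ i, a i ω * y i ≤ b →
          ∑ i, (f i ω * a i ω) * y i ≤ ∑ i, (f i ω * a i ω) * ytil i) →
        {i | ytil i ∈ Set.Ioo (0 : ℝ) 1}.Subsingleton →
        ((((Finset.univ : Finset (Fin n)).filter (fun i => ytil i = 1)).card : ℝ)
            - 4 * Real.sqrt 2 * (n : ℝ) ^ ((3 : ℝ) / 4)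
          ≤ ∑ i ∈ (Finset.univ : Finset (Fin n)).filter (fun i => ytil i = 1), ystar i) ∧
        (∑ i ∈ (Finset.univ : Finset (Fin n)).filter (fun i => ytil i = 0), ystar i
          ≤ 4 * Real.sqrt 2 * (n : ℝ) ^ ((3 : ℝ) / 4))} := by
  classical
  by_cases hbig : 1025 ≤ n
  · -- main case
    obtain ⟨hx0, hx4, hx2, hx3, hxs⟩ := x_facts n hbig
    set x : ℝ := (n:ℝ)^((1:ℝ)/4) with hxdef
    obtain ⟨hs2, hs565⟩ := s_facts
    have hx565 : (5.65:ℝ) ≤ x := hs565.trans hxs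
    set K : ℕ := ⌈2*Real.sqrt n⌉₊ - 1 with hKdef
    have hsq0 : (0:ℝ) < 2*Real.sqrt n := by rw [← hx2]; positivity
    have hm1 : 1 ≤ ⌈2*Real.sqrt n⌉₊ := Nat.ceil_pos.2 hsq0
    have hKcast : (K:ℝ) = (⌈2*Real.sqrt n⌉₊:ℝ) - 1 := by
      rw [hKdef, Nat.cast_sub hm1, Nat.cast_one]
    have hK1 : 2*Real.sqrt n - 1 ≤ (K:ℝ) := by
      rw [hKcast]; linarith [Nat.le_ceil (2*Real.sqrt n)]
    have hK2 : (K:ℝ) ≤ 2*Real.sqrt n := by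
      rw [hKcast]
      have := Nat.ceil_lt_add_one (a := 2*Real.sqrt n) hsq0.le
      linarith
    have hsqn : Real.sqrt n = x^2 := hx2.symm
    have hKposR : (0:ℝ) < (K:ℝ) := by rw [hsqn] at hK1; nlinarith
    have hKpos : 0 < K := by exact_mod_cast hKposR
    -- events
    set cap : ℝ := (n:ℝ)/K + Real.sqrt n/2 with hcapdef
    set Nk : ℕ → Ω → ℝ := fun k ω =>
      ∑ i, (Set.Ico ((k:ℝ)/K) (((k:ℝ)+1)/K)).indicator (fun _ => (1:ℝ)) (f i ω) with hNkdef
    set Va : Ω → ℝ := fun ω =>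
      ∑ i, (Set.Iic x⁻¹).indicator (fun _ => (1:ℝ)) (a i ω) with hVadef
    set bad : Set Ω := (⋃ k ∈ Finset.range K, {ω | cap ≤ Nk k ω})
      ∪ {ω | 2*(n:ℝ)^((3:ℝ)/4) ≤ Va ω} with hbaddef
    have hNkmeas : ∀ k, Measurable (Nk k) := by
      intro k
      apply Finset.measurable_sum
      intro i _
      exact (measurable_const.indicator measurableSet_Ico).comp (hfmeas i)
    have hVameas : Measurable Va := by
      apply Finset.measurable_sum
      intro i _
      exact (measurable_const.indicator measurableSet_Iic).comp (hameas i)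
    have hbadmeas : MeasurableSet bad := by
      apply MeasurableSet.union
      · apply Finset.measurableSet_biUnion
        intro k _
        exact measurableSet_le measurable_const (hNkmeas k)
      · exact measurableSet_le measurable_const hVameas
    -- per-bucket Chernoff
    have hbadk : ∀ k ∈ Finset.range K,
        μ {ω | cap ≤ Nk k ω} ≤ ENNReal.ofReal (Real.exp (-Real.sqrt n/8)) := by
      intro k hk
      rw [Finset.mem_range] at hk
      have hIsub : Set.Ico ((k:ℝ)/K) (((k:ℝ)+1)/K) ⊆ Set.Icc 0 1 := by
        intro z hz
        obtain ⟨h1, h2⟩ := hz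
        constructor
        · exact le_trans (by positivity) h1
        · apply le_of_lt (lt_of_lt_of_le h2 _)
          rw [div_le_one hKposR]
          have : (k:ℝ) + 1 ≤ (K:ℝ) := by exact_mod_cast hk
          linarith
      have hpI : ∀ i, μ (f i ⁻¹' (Set.Ico ((k:ℝ)/K) (((k:ℝ)+1)/K)))
          = ENNReal.ofReal (1/(K:ℝ)) := by
        intro i
        rw [← Measure.map_apply (hfmeas i) measurableSet_Ico, hfunif i,
          Measure.restrict_apply measurableSet_Ico,
          Set.inter_eq_left.mpr hIsub, Real.volume_Ico]
        congr 1
        ring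
      have hch := chernoff_right μ a f hameas hfmeas hind _ measurableSet_Ico
        (1/(K:ℝ)) (by positivity) hpI cap
      refine hch.trans (ENNReal.ofReal_le_ofReal (Real.exp_le_exp.2 ?_))
      have hnb := numeric_bucket x K hxs (by rw [hsqn] at hK1; exact hK1)
        (by rw [hsqn] at hK2; exact hK2)
      rw [hcapdef, hsqn, ← hx4]
      have he : x^4*(1/(K:ℝ)) = x^4/K := by ring
      rw [he]
      linarith
    -- a-side Chernoff
    have hxinvle1 : x⁻¹ ≤ 1 := by
      rw [inv_le_one_iff₀]
      right; linarith
    have hbadA : μ {ω | 2*(n:ℝ)^((3:ℝ)/4) ≤ Va ω}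
        ≤ ENNReal.ofReal (Real.exp (-Real.sqrt n/8)) := by
      have hxinv0 : (0:ℝ) ≤ x⁻¹ := by positivity
      have hpI : ∀ i, μ (a i ⁻¹' (Set.Iic x⁻¹)) = ENNReal.ofReal x⁻¹ := by
        intro i
        rw [← Measure.map_apply (hameas i) measurableSet_Iic, haunif i,
          Measure.restrict_apply measurableSet_Iic]
        have : Set.Iic x⁻¹ ∩ Set.Icc (0:ℝ) 1 = Set.Icc 0 x⁻¹ := by
          ext z
          simp only [Set.mem_inter_iff, Set.mem_Iic, Set.mem_Icc]
          constructor
          · rintro ⟨h1, h2, h3⟩; exact ⟨h2, h1⟩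
          · rintro ⟨h1, h2⟩; exact ⟨h2, h1, h2.trans hxinvle1⟩
        rw [this, Real.volume_Icc, sub_zero]
      have hch := chernoff_left μ a f hameas hfmeas hind _ measurableSet_Iic
        x⁻¹ hxinv0 hpI (2*(n:ℝ)^((3:ℝ)/4))
      refine hch.trans (ENNReal.ofReal_le_ofReal (Real.exp_le_exp.2 ?_))
      have hna := numeric_a x hxs
      rw [hsqn, ← hx3, ← hx4]
      linarith
    -- union bound
    have hμbad : μ bad ≤ (⌈2*Real.sqrt n⌉₊ : ℝ≥0∞)
        * ENNReal.ofReal (Real.exp (-Real.sqrt n/8)) := by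
      calc μ bad ≤ μ (⋃ k ∈ Finset.range K, {ω | cap ≤ Nk k ω})
            + μ {ω | 2*(n:ℝ)^((3:ℝ)/4) ≤ Va ω} := measure_union_le _ _
        _ ≤ (∑ k ∈ Finset.range K, μ {ω | cap ≤ Nk k ω})
            + ENNReal.ofReal (Real.exp (-Real.sqrt n/8)) :=
              add_le_add (measure_biUnion_finset_le _ _) hbadA
        _ ≤ (∑ _k ∈ Finset.range K, ENNReal.ofReal (Real.exp (-Real.sqrt n/8)))
            + ENNReal.ofReal (Real.exp (-Real.sqrt n/8)) :=
              add_le_add (Finset.sum_le_sum hbadk) le_rfl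
        _ = ((K:ℝ≥0∞) + 1) * ENNReal.ofReal (Real.exp (-Real.sqrt n/8)) := by
              rw [Finset.sum_const, Finset.card_range, nsmul_eq_mul, add_mul, one_mul]
        _ = (⌈2*Real.sqrt n⌉₊ : ℝ≥0∞) * ENNReal.ofReal (Real.exp (-Real.sqrt n/8)) := by
              congr 1
              have : K + 1 = ⌈2*Real.sqrt n⌉₊ := by omega
              rw [← this]
              push_cast
              ring
    -- good event, a.s. event
    set AS : Set Ω := {ω | ∀ i, (a i ω ∈ Set.Ioc (0:ℝ) 1) ∧ (f i ω ∈ Set.Ioo (0:ℝ) 1)}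
      with hASdef
    have hASnull : μ ASᶜ = 0 := as_null μ a f hameas hfmeas haunif hfunif
    have hsubT : badᶜ ∩ AS ⊆ {ω | ∀ ystar : Fin n → ℝ,
        (∀ i, ystar i = 0 ∨ ystar i = 1) →
        (∑ i, a i ω * ystar i ≤ b) →
        (∀ y : Fin n → ℝ, (∀ i, y i = 0 ∨ y i = 1) → ∑ i, a i ω * y i ≤ b →
          ∑ i, (f i ω * a i ω) * y i ≤ ∑ i, (f i ω * a i ω) * ystar i) →
        ∀ ytil : Fin n → ℝ,
        (∀ i, ytil i ∈ Set.Icc (0 : ℝ) 1) →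
        (∑ i, a i ω * ytil i ≤ b) →
        (∀ y : Fin n → ℝ, (∀ i, y i ∈ Set.Icc (0 : ℝ) 1) → ∑ i, a i ω * y i ≤ b →
          ∑ i, (f i ω * a i ω) * y i ≤ ∑ i, (f i ω * a i ω) * ytil i) →
        {i | ytil i ∈ Set.Ioo (0 : ℝ) 1}.Subsingleton →
        ((((Finset.univ : Finset (Fin n)).filter (fun i => ytil i = 1)).card : ℝ)
            - 4 * Real.sqrt 2 * (n : ℝ) ^ ((3 : ℝ) / 4)
          ≤ ∑ i ∈ (Finset.univ : Finset (Fin n)).filter (fun i => ytil i = 1), ystar i) ∧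
        (∑ i ∈ (Finset.univ : Finset (Fin n)).filter (fun i => ytil i = 0), ystar i
          ≤ 4 * Real.sqrt 2 * (n : ℝ) ^ ((3 : ℝ) / 4))} := by
      rintro ω ⟨hg, hAS⟩
      rw [Set.mem_setOf_eq]
      intro ystar hbin hifeas hiopt ytil hbox hlfeas hlopt hfrac
      rw [hASdef, Set.mem_setOf_eq] at hAS
      rw [Set.mem_compl_iff, hbaddef, Set.mem_union, not_or] at hg
      obtain ⟨hg1, hg2⟩ := hg
      have hbuckω : ∀ k : ℕ, k < K →
          (((univ : Finset (Fin n)).filter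
            (fun i => f i ω ∈ Set.Ico ((k : ℝ)/K) (((k : ℝ)+1)/K))).card : ℝ)
          ≤ (n:ℝ)/K + Real.sqrt n/2 := by
        intro k hk
        have hnot : ¬ (cap ≤ Nk k ω) := by
          intro hcon
          apply hg1
          apply Set.mem_biUnion (Finset.mem_coe.2 (Finset.mem_range.2 hk))
          exact hcon
        rw [not_le] at hnot
        have hcount : (((univ : Finset (Fin n)).filter
            (fun i => f i ω ∈ Set.Ico ((k : ℝ)/K) (((k : ℝ)+1)/K))).card : ℝ) = Nk k ω := by
          rw [hNkdef, ← Finset.sum_boole]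
          apply Finset.sum_congr rfl
          intro i _
          by_cases h : f i ω ∈ Set.Ico ((k : ℝ)/K) (((k : ℝ)+1)/K)
          · simp [h]
          · simp [h]
        rw [hcount]
        exact le_of_lt hnot
      have hAω : (((univ : Finset (Fin n)).filter
            (fun i => a i ω ≤ ((n:ℝ)^((1:ℝ)/4))⁻¹)).card : ℝ) ≤ 2*(n:ℝ)^((3:ℝ)/4) := by
        simp only [Set.mem_setOf_eq, not_le] at hg2
        have hcount : (((univ : Finset (Fin n)).filter
            (fun i => a i ω ≤ ((n:ℝ)^((1:ℝ)/4))⁻¹)).card : ℝ) = Va ω := by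
          rw [hVadef, ← Finset.sum_boole]
          apply Finset.sum_congr rfl
          intro i _
          by_cases h : a i ω ≤ x⁻¹
          · simp [Set.indicator_apply, Set.mem_Iic, h, hxdef]
          · simp [Set.indicator_apply, Set.mem_Iic, h, hxdef]
        rw [hcount]
        exact le_of_lt hg2
      exact det_core n K hbig hK1 hK2 b (fun i => a i ω) (fun i => f i ω)
        (fun i => (hAS i).1.1) (fun i => (hAS i).1.2)
        (fun i => (hAS i).2.1) (fun i => (hAS i).2.2)
        hbuckω hAω ystar hbin hifeas hiopt ytil hbox hlfeas hlopt hfrac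
    -- combine
    have h1 : 1 - (⌈2*Real.sqrt n⌉₊ : ℝ≥0∞) * ENNReal.ofReal (Real.exp (-Real.sqrt n/8))
        ≤ μ badᶜ := by
      rw [measure_compl hbadmeas (measure_ne_top μ bad), measure_univ]
      exact tsub_le_tsub_left hμbad 1
    have h2 : μ badᶜ ≤ μ (badᶜ ∩ AS) := by
      calc μ badᶜ ≤ μ ((badᶜ ∩ AS) ∪ ASᶜ) := by
            apply measure_mono
            intro ω hω
            by_cases hA : ω ∈ AS
            · exact Set.mem_union_left _ ⟨hω, hA⟩
            · exact Set.mem_union_right _ hA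
        _ ≤ μ (badᶜ ∩ AS) + μ ASᶜ := measure_union_le _ _
        _ = μ (badᶜ ∩ AS) := by rw [hASnull, add_zero]
    exact le_trans h1 (le_trans h2 (measure_mono hsubT))
  · -- trivial case: n ≤ 1024
    push_neg at hbig
    obtain ⟨hx0, hx4, hx3⟩ := x_id n hn
    set x : ℝ := (n:ℝ)^((1:ℝ)/4) with hxdef
    have hxle : x ≤ 4*Real.sqrt 2 := by
      obtain ⟨hs2, hs565⟩ := s_facts
      by_contra hcon
      push_neg at hcon
      have h1 : (4*Real.sqrt 2)^4 < x^4 := by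
        apply pow_lt_pow_left₀ hcon (by positivity)
        norm_num
      have h1024 : (4*Real.sqrt 2)^4 = 1024 := by nlinarith
      have h2 : (n:ℝ) ≤ 1024 := by exact_mod_cast Nat.lt_succ_iff.mp hbig
      rw [h1024, hx4] at h1
      linarith
    have hkey : (n:ℝ) ≤ 4*Real.sqrt 2*(n:ℝ)^((3:ℝ)/4) := by
      have h2 : (0:ℝ) ≤ (n:ℝ)^((3:ℝ)/4) := by
        rw [← hx3]; positivity
      calc (n:ℝ) = x * x^3 := by rw [← hx4]; ring
        _ = x * (n:ℝ)^((3:ℝ)/4) := by rw [hx3]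
        _ ≤ 4*Real.sqrt 2 * (n:ℝ)^((3:ℝ)/4) := mul_le_mul_of_nonneg_right hxle h2
    have huniv : {ω : Ω | ∀ ystar : Fin n → ℝ,
        (∀ i, ystar i = 0 ∨ ystar i = 1) →
        (∑ i, a i ω * ystar i ≤ b) →
        (∀ y : Fin n → ℝ, (∀ i, y i = 0 ∨ y i = 1) → ∑ i, a i ω * y i ≤ b →
          ∑ i, (f i ω * a i ω) * y i ≤ ∑ i, (f i ω * a i ω) * ystar i) →
        ∀ ytil : Fin n → ℝ,
        (∀ i, ytil i ∈ Set.Icc (0 : ℝ) 1) →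
        (∑ i, a i ω * ytil i ≤ b) →
        (∀ y : Fin n → ℝ, (∀ i, y i ∈ Set.Icc (0 : ℝ) 1) → ∑ i, a i ω * y i ≤ b →
          ∑ i, (f i ω * a i ω) * y i ≤ ∑ i, (f i ω * a i ω) * ytil i) →
        {i | ytil i ∈ Set.Ioo (0 : ℝ) 1}.Subsingleton →
        ((((Finset.univ : Finset (Fin n)).filter (fun i => ytil i = 1)).card : ℝ)
            - 4 * Real.sqrt 2 * (n : ℝ) ^ ((3 : ℝ) / 4)
          ≤ ∑ i ∈ (Finset.univ : Finset (Fin n)).filter (fun i => ytil i = 1), ystar i) ∧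
        (∑ i ∈ (Finset.univ : Finset (Fin n)).filter (fun i => ytil i = 0), ystar i
          ≤ 4 * Real.sqrt 2 * (n : ℝ) ^ ((3 : ℝ) / 4))} = Set.univ := by
      apply Set.eq_univ_of_forall
      intro ω
      rw [Set.mem_setOf_eq]
      intro ystar hbin _ _ ytil _ _ _ _
      have hcard : ∀ P : Fin n → Prop, ∀ (_ : DecidablePred P),
          (((univ : Finset (Fin n)).filter P).card : ℝ) ≤ (n:ℝ) := by
        intro P hP
        have := Finset.card_filter_le (univ : Finset (Fin n)) P
        rw [Finset.card_univ, Fintype.card_fin] at this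
        exact_mod_cast this
      constructor
      · have h1 : (0:ℝ) ≤ ∑ i ∈ (univ : Finset (Fin n)).filter (fun i => ytil i = 1),
            ystar i := by
          apply Finset.sum_nonneg
          intro i _
          rcases hbin i with h | h <;> rw [h] <;> norm_num
        have h2 := hcard (fun i => ytil i = 1) inferInstance
        linarith
      · have h1 : ∑ i ∈ (univ : Finset (Fin n)).filter (fun i => ytil i = 0), ystar i
            ≤ (((univ : Finset (Fin n)).filter (fun i => ytil i = 0)).card : ℝ) := by
          calc ∑ i ∈ (univ : Finset (Fin n)).filter (fun i => ytil i = 0), ystar i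
              ≤ ∑ _i ∈ (univ : Finset (Fin n)).filter (fun i => ytil i = 0), (1:ℝ) := by
                apply Finset.sum_le_sum
                intro i _
                rcases hbin i with h | h <;> rw [h] <;> norm_num
            _ = _ := by rw [Finset.sum_const, nsmul_eq_mul, mul_one]
        have h2 := hcard (fun i => ytil i = 0) inferInstance
        linarith
    rw [huniv, measure_univ]
    exact tsub_le_self
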